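/- arXiv:1404.5906 — 2 statements merged into one kernel-verified Lean document; each statement's English description precedes it below -/
import Mathlib

section
/- The one-step point-based value iteration error is bounded by the sampling density: if V_t is any value function, H̃ the point-based backup over a sampled belief set Σ̃, H the exact backup, and the α-functions all take values in [0,1], then ‖H̃[V_t] - H[V_t]‖_∞ ≤ δ(Σ̃), where δ(Σ̃) = sup_{σ∈Σ} inf_{σ̃∈Σ̃} ‖σ - σ̃‖₁ is the maximal L¹ distance from beliefs in Σ to their nearest sample. -/
open MeasureTheory

/-- One-step point-based value iteration error bound: the gap between the exact
backup `H[V](σ) = sup_{α∈Γ} ⟨α,σ⟩` and the point-based backup (a supremum over the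
α-functions `sel σ̃` that are maximal at the sampled beliefs `σ̃ ∈ Σ̃`) is bounded by
the sampling density `δ(Σ̃)`. -/
theorem pbvi_one_step_error {S : Type*} [MeasurableSpace S] (μ : Measure S)
    (Sfull : Set (S → ℝ)) (Stil : Set (S → ℝ))
    (hsub : Stil ⊆ Sfull) (hfin : Stil.Finite) (hSne : Stil.Nonempty)
    (Γ : Set (S → ℝ)) (hΓne : Γ.Nonempty)
    (hΓ : ∀ α ∈ Γ, Measurable α ∧ ∀ s, α s ∈ Set.Icc (0:ℝ) 1)
    (hσint : ∀ σ ∈ Sfull, Integrable σ μ)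
    (sel : (S → ℝ) → (S → ℝ))
    (hsel : ∀ σ' ∈ Stil, sel σ' ∈ Γ ∧
      ∀ α ∈ Γ, ∫ s, α s * σ' s ∂μ ≤ ∫ s, (sel σ') s * σ' s ∂μ)
    (hattain : ∀ σ ∈ Sfull, ∃ α ∈ Γ,
      ∀ α' ∈ Γ, ∫ s, α' s * σ s ∂μ ≤ ∫ s, α s * σ s ∂μ)
    (δ : ℝ) (hδ0 : 0 ≤ δ)
    (hδ : ∀ σ ∈ Sfull, ∃ σ' ∈ Stil, ∫ s, |σ s - σ' s| ∂μ ≤ δ) :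
    ∀ σ ∈ Sfull,
      |sSup {r : ℝ | ∃ σ' ∈ Stil, r = ∫ s, (sel σ') s * σ s ∂μ} -
          sSup {r : ℝ | ∃ α ∈ Γ, r = ∫ s, α s * σ s ∂μ}| ≤ δ := by
  intro σ hσ
  obtain ⟨αs, hαsΓ, hαsmax⟩ := hattain σ hσ
  obtain ⟨σ', hσ'S, hσ'δ⟩ := hδ σ hσ
  have hσ'full : σ' ∈ Sfull := hsub hσ'S
  -- integrability of α * τ for α ∈ Γ and integrable τ
  have hint : ∀ α ∈ Γ, ∀ τ ∈ Sfull, Integrable (fun s => α s * τ s) μ := by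
    intro α hα τ hτ
    refine (hσint τ hτ).bdd_mul (hΓ α hα).1.aestronglyMeasurable (c := 1) (ae_of_all _ fun s => ?_)
    have h := (hΓ α hα).2 s
    rw [Real.norm_eq_abs, abs_le]
    exact ⟨by linarith [h.1], h.2⟩
  set T1 : Set ℝ := {r : ℝ | ∃ σ' ∈ Stil, r = ∫ s, (sel σ') s * σ s ∂μ} with hT1
  set T2 : Set ℝ := {r : ℝ | ∃ α ∈ Γ, r = ∫ s, α s * σ s ∂μ} with hT2
  set B : ℝ := ∫ s, αs s * σ s ∂μ with hB
  have hT2eq : sSup T2 = B := by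
    apply IsGreatest.csSup_eq
    constructor
    · exact ⟨αs, hαsΓ, rfl⟩
    · rintro r ⟨α, hα, rfl⟩; exact hαsmax α hα
  have hT1ub : ∀ r ∈ T1, r ≤ B := by
    rintro r ⟨τ, hτ, rfl⟩
    exact hαsmax _ (hsel τ hτ).1
  have hT1bdd : BddAbove T1 := ⟨B, hT1ub⟩
  have hT1ne : T1.Nonempty := ⟨_, σ', hσ'S, rfl⟩
  have hA1 : sSup T1 ≤ B := csSup_le hT1ne hT1ub
  have hmem : (∫ s, (sel σ') s * σ s ∂μ) ∈ T1 := ⟨σ', hσ'S, rfl⟩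
  have hA2 : (∫ s, (sel σ') s * σ s ∂μ) ≤ sSup T1 := le_csSup hT1bdd hmem
  -- key bound: B - ⟨sel σ', σ⟩ ≤ δ
  have hselΓ := (hsel σ' hσ'S).1
  have i1 := hint αs hαsΓ σ hσ
  have i2 := hint (sel σ') hselΓ σ hσ
  have i3 := hint αs hαsΓ σ' hσ'full
  have i4 := hint (sel σ') hselΓ σ' hσ'full
  have iabs : Integrable (fun s => |σ s - σ' s|) μ :=
    ((hσint σ hσ).sub (hσint σ' hσ'full)).abs
  have hd1 : ∀ s, |αs s - sel σ' s| ≤ 1 := by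
    intro s
    have h1 := (hΓ αs hαsΓ).2 s
    have h2 := (hΓ (sel σ') hselΓ).2 s
    rw [abs_le]; constructor <;> [linarith [h1.1, h2.2]; linarith [h1.2, h2.1]]
  have iprod : Integrable (fun s => (αs s - sel σ' s) * (σ s - σ' s)) μ := by
    refine ((hσint σ hσ).sub (hσint σ' hσ'full)).bdd_mul
      (((hΓ αs hαsΓ).1.sub (hΓ (sel σ') hselΓ).1).aestronglyMeasurable) (c := 1) (ae_of_all _ fun s => ?_)
    rw [Real.norm_eq_abs]; exact hd1 s
  have e1 : ∫ s, (αs s - sel σ' s) * (σ s - σ' s) ∂μ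
      = ((∫ s, αs s * σ s ∂μ) - (∫ s, (sel σ') s * σ s ∂μ))
        - ((∫ s, αs s * σ' s ∂μ) - (∫ s, (sel σ') s * σ' s ∂μ)) := by
    have heq : ∀ s, (αs s - sel σ' s) * (σ s - σ' s)
        = αs s * σ s - (sel σ') s * σ s - (αs s * σ' s - (sel σ') s * σ' s) := by
      intro s; ring
    have i12 : Integrable (fun s => αs s * σ s - sel σ' s * σ s) μ := i1.sub i2
    have i34 : Integrable (fun s => αs s * σ' s - sel σ' s * σ' s) μ := i3.sub i4
    simp_rw [heq]
    rw [integral_sub i12 i34, integral_sub i1 i2, integral_sub i3 i4]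
  have ebound : ∫ s, (αs s - sel σ' s) * (σ s - σ' s) ∂μ ≤ ∫ s, |σ s - σ' s| ∂μ := by
    apply integral_mono iprod iabs
    intro s
    calc (αs s - sel σ' s) * (σ s - σ' s) ≤ |(αs s - sel σ' s) * (σ s - σ' s)| := le_abs_self _
      _ = |αs s - sel σ' s| * |σ s - σ' s| := abs_mul _ _
      _ ≤ 1 * |σ s - σ' s| := by
          apply mul_le_mul_of_nonneg_right (hd1 s) (abs_nonneg _)
      _ = |σ s - σ' s| := one_mul _
  have hselbest := (hsel σ' hσ'S).2 αs hαsΓ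
  have key : B - (∫ s, (sel σ') s * σ s ∂μ) ≤ δ := by
    rw [hB]; linarith
  rw [hT2eq, abs_sub_le_iff]
  constructor <;> linarith
end

section
/- If α_{t+1}(x', q') is a finite Gaussian mixture in x' for each discrete mode q' (finitely many modes), and the backup integrand consists of: a mode-transition weight Q_{q',y}(u), an observation likelihood that is a finite Gaussian mixture in x', a continuous transition kernel φ(x'; Ax+f(q',u), W) with A invertible, a mixture approximation Σⱼ wⱼ φ(x; μⱼ, Σⱼ) for the discrete transition probability, and an indicator approximation that is a finite Gaussian mixture in x — then the backed-up function α_{y,u}(x,q) = Σ_{q'} Q_{q',y}(u) ∫ α_{t+1}(x',q') ψ(y|x',u) φ(x'; Ax+f, W) dx' · T_q-mixture(x) · 1_K-mixture(x) is again, for each q, a finite Gaussian mixture in x. -/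
open Real Matrix MeasureTheory

/-- Multivariate Gaussian density on ℝⁿ with mean `μ` and covariance `S`. -/
noncomputable def gaussN (n : ℕ) (μ : Fin n → ℝ) (S : Matrix (Fin n) (Fin n) ℝ)
    (x : Fin n → ℝ) : ℝ :=
  (2 * Real.pi) ^ (-(n:ℝ)/2) * S.det ^ (-(1:ℝ)/2) *
    Real.exp (-(1/2) * ((x - μ) ⬝ᵥ (S⁻¹ *ᵥ (x - μ))))

/-- A finite real linear combination of Gaussian densities on ℝⁿ (with positive
definite covariances). -/
def IsGaussMixture (n : ℕ) (g : (Fin n → ℝ) → ℝ) : Prop :=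
  ∃ (M : ℕ) (c : Fin M → ℝ) (m : Fin M → (Fin n → ℝ))
    (C : Fin M → Matrix (Fin n) (Fin n) ℝ),
    (∀ k, (C k).PosDef) ∧ ∀ x, g x = ∑ k, c k * gaussN n (m k) (C k) x

namespace GaussBackup

variable {n : ℕ}

/-- the set of Gaussian densities with positive definite covariance -/
def gaussSet (n : ℕ) : Set ((Fin n → ℝ) → ℝ) :=
  {g | ∃ μ S, Matrix.PosDef S ∧ g = gaussN n μ S}

lemma tEq {M : Matrix (Fin n) (Fin n) ℝ} (hM : M.PosDef) : Mᵀ = M := by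
  rw [← Matrix.conjTranspose_eq_transpose_of_trivial]; exact hM.1

lemma posDef_apply {M : Matrix (Fin n) (Fin n) ℝ} (hM : M.PosDef) {x : Fin n → ℝ}
    (hx : x ≠ 0) : 0 < x ⬝ᵥ (M *ᵥ x) := by
  simpa using hM.dotProduct_mulVec_pos hx

lemma dp_symm {P : Matrix (Fin n) (Fin n) ℝ} (hP : Pᵀ = P) (a b : Fin n → ℝ) :
    a ⬝ᵥ (P *ᵥ b) = b ⬝ᵥ (P *ᵥ a) := by
  rw [dotProduct_mulVec]
  conv_lhs => rw [← hP]
  rw [vecMul_transpose, dotProduct_comm]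

lemma quad_expand {P : Matrix (Fin n) (Fin n) ℝ} (hP : Pᵀ = P) (μ x : Fin n → ℝ) :
    (x - μ) ⬝ᵥ (P *ᵥ (x - μ))
      = x ⬝ᵥ (P *ᵥ x) - 2 * (x ⬝ᵥ (P *ᵥ μ)) + μ ⬝ᵥ (P *ᵥ μ) := by
  rw [mulVec_sub, dotProduct_sub, sub_dotProduct, sub_dotProduct, dp_symm hP μ x]
  ring

lemma isGaussMixture_iff {g : (Fin n → ℝ) → ℝ} :
    IsGaussMixture n g ↔ g ∈ Submodule.span ℝ (gaussSet n) := by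
  constructor
  · rintro ⟨M, c, m, C, hC, hg⟩
    have : g = ∑ k, c k • gaussN n (m k) (C k) := by
      funext x
      rw [hg x]
      simp [Finset.sum_apply]
    rw [this]
    exact Submodule.sum_mem _ fun k _ => Submodule.smul_mem _ _
      (Submodule.subset_span ⟨m k, C k, hC k, rfl⟩)
  · intro hg
    obtain ⟨M, c, v, hsum⟩ := Submodule.mem_span_set'.mp hg
    choose μ S hS hv using fun k => (v k).2
    refine ⟨M, c, μ, S, hS, fun x => ?_⟩
    rw [← hsum]
    simp only [Finset.sum_apply, Pi.smul_apply, smul_eq_mul]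
    exact Finset.sum_congr rfl fun k _ => by rw [hv k]

lemma mem_span_of_eq {g h : (Fin n → ℝ) → ℝ} (hgh : ∀ x, g x = h x)
    (hh : h ∈ Submodule.span ℝ (gaussSet n)) : g ∈ Submodule.span ℝ (gaussSet n) := by
  have : g = h := funext hgh
  rwa [this]

lemma continuous_dp (T : Matrix (Fin n) (Fin n) ℝ) :
    Continuous fun v : Fin n → ℝ => v ⬝ᵥ (T *ᵥ v) := by
  simp only [dotProduct, mulVec]
  exact continuous_finset_sum _ fun i _ => (continuous_apply i).mul
    (continuous_finset_sum _ fun j _ => continuous_const.mul (continuous_apply j))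

lemma continuous_gaussN (μ : Fin n → ℝ) (S : Matrix (Fin n) (Fin n) ℝ) :
    Continuous (gaussN n μ S) := by
  unfold gaussN
  exact continuous_const.mul (Real.continuous_exp.comp (continuous_const.mul
    ((continuous_dp S⁻¹).comp (continuous_id.sub continuous_const))))


lemma posdef_quad_lower {T : Matrix (Fin n) (Fin n) ℝ} (hT : T.PosDef) :
    ∃ c > 0, ∀ v : Fin n → ℝ, c * ∑ i, v i ^ 2 ≤ v ⬝ᵥ (T *ᵥ v) := by
  have hpos : ∀ x : Fin n → ℝ, x ≠ 0 → 0 < x ⬝ᵥ (T *ᵥ x) := fun x hx => posDef_apply hT hx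
  have hcont := continuous_dp (n := n) T
  rcases Nat.eq_zero_or_pos n with rfl | hn
  · exact ⟨1, one_pos, fun v => by simp [dotProduct]⟩
  haveI : Nonempty (Fin n) := ⟨⟨0, hn⟩⟩
  have hne : (Metric.sphere (0 : Fin n → ℝ) 1).Nonempty :=
    NormedSpace.sphere_nonempty.mpr zero_le_one
  obtain ⟨u, hu, hmin⟩ := (isCompact_sphere (0 : Fin n → ℝ) 1).exists_isMinOn hne
    hcont.continuousOn
  have hu1 : ‖u‖ = 1 := by simpa using mem_sphere_zero_iff_norm.mp hu
  have hm : 0 < u ⬝ᵥ (T *ᵥ u) := hpos u (by intro h; rw [h] at hu1; simp at hu1)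
  set m := u ⬝ᵥ (T *ᵥ u) with hmdef
  have h2 : ∀ v : Fin n → ℝ, m * ‖v‖ ^ 2 ≤ v ⬝ᵥ (T *ᵥ v) := by
    intro v
    rcases eq_or_ne v 0 with rfl | hv
    · simp
    · have hr : 0 < ‖v‖ := norm_pos_iff.mpr hv
      have hu' : (‖v‖⁻¹ • v) ∈ Metric.sphere (0 : Fin n → ℝ) 1 := by
        rw [mem_sphere_zero_iff_norm, norm_smul]
        simp [abs_of_pos (inv_pos.mpr hr), inv_mul_cancel₀ hr.ne']
      have hle := hmin hu'
      simp only [Set.mem_setOf_eq] at hle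
      have hscale : (‖v‖⁻¹ • v) ⬝ᵥ (T *ᵥ (‖v‖⁻¹ • v)) = ‖v‖⁻¹ ^ 2 * (v ⬝ᵥ (T *ᵥ v)) := by
        rw [mulVec_smul, dotProduct_smul, smul_dotProduct]
        simp [smul_eq_mul]; ring
      simp only [hscale] at hle
      have h3 : m * ‖v‖ ^ 2 ≤ (‖v‖⁻¹ ^ 2 * (v ⬝ᵥ (T *ᵥ v))) * ‖v‖ ^ 2 :=
        mul_le_mul_of_nonneg_right hle (by positivity)
      calc m * ‖v‖ ^ 2 ≤ (‖v‖⁻¹ ^ 2 * (v ⬝ᵥ (T *ᵥ v))) * ‖v‖ ^ 2 := h3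
        _ = v ⬝ᵥ (T *ᵥ v) := by field_simp
  refine ⟨m / n, by positivity, fun v => ?_⟩
  have h1 : ∑ i, v i ^ 2 ≤ (n : ℝ) * ‖v‖ ^ 2 := by
    calc ∑ i, v i ^ 2 ≤ ∑ _i : Fin n, ‖v‖ ^ 2 := by
          refine Finset.sum_le_sum fun i _ => ?_
          have h := norm_le_pi_norm v i
          have : |v i| ≤ ‖v‖ := by simpa using h
          nlinarith [abs_nonneg (v i), sq_abs (v i)]
      _ = (n : ℝ) * ‖v‖ ^ 2 := by simp [Finset.sum_const, Finset.card_univ]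
  calc m / n * ∑ i, v i ^ 2 ≤ m / n * ((n : ℝ) * ‖v‖ ^ 2) :=
        mul_le_mul_of_nonneg_left h1 (by positivity)
    _ = m * ‖v‖ ^ 2 := by
        have : (n : ℝ) ≠ 0 := Nat.cast_ne_zero.mpr hn.ne'
        field_simp
    _ ≤ _ := h2 v

lemma integrable_exp_neg_mul_sum {b : ℝ} (hb : 0 < b) :
    Integrable (fun v : Fin n → ℝ => Real.exp (-b * ∑ i, v i ^ 2)) := by
  have h := (GaussianFourier.integrable_cexp_neg_mul_sum_add (ι := Fin n) (b := (b : ℂ))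
    (by simpa using hb) (fun _ => (0 : ℂ))).norm
  refine h.congr (Filter.Eventually.of_forall fun v => ?_)
  have hz : (-(b : ℂ) * ∑ i, (v i : ℂ) ^ 2 + ∑ i, (0 : ℂ) * (v i : ℂ))
      = ((-b * ∑ i, v i ^ 2 : ℝ) : ℂ) := by push_cast; simp
  simp only [hz, Complex.norm_exp, Complex.ofReal_re]

lemma pref_pos {S : Matrix (Fin n) (Fin n) ℝ} (hS : S.PosDef) :
    0 < (2 * Real.pi) ^ (-(n:ℝ)/2) * S.det ^ (-(1:ℝ)/2) := by
  have h1 : (0:ℝ) < 2 * Real.pi := by positivity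
  have h2 : (0:ℝ) < S.det := hS.det_pos
  positivity

lemma gaussN_pos {S : Matrix (Fin n) (Fin n) ℝ} (hS : S.PosDef) (μ x : Fin n → ℝ) :
    0 < gaussN n μ S x := by
  unfold gaussN
  exact mul_pos (pref_pos hS) (Real.exp_pos _)

lemma gaussN_integrable {S : Matrix (Fin n) (Fin n) ℝ} (hS : S.PosDef) (μ : Fin n → ℝ) :
    Integrable (gaussN n μ S) := by
  obtain ⟨c, hc, hbound⟩ := posdef_quad_lower (hS.inv)
  set p := (2 * Real.pi) ^ (-(n:ℝ)/2) * S.det ^ (-(1:ℝ)/2) with hp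
  have hppos : 0 < p := pref_pos hS
  have hmaj : Integrable (fun x : Fin n → ℝ => p * Real.exp (-(c/2) * ∑ i, (x - μ) i ^ 2)) :=
    ((integrable_exp_neg_mul_sum (by positivity : (0:ℝ) < c/2)).comp_sub_right μ).const_mul p
  refine hmaj.mono' (continuous_gaussN μ S).aestronglyMeasurable
    (Filter.Eventually.of_forall fun x => ?_)
  have hg : 0 < gaussN n μ S x := gaussN_pos hS μ x
  rw [Real.norm_eq_abs, abs_of_pos hg]
  unfold gaussN
  rw [← hp]
  refine mul_le_mul_of_nonneg_left (Real.exp_le_exp.mpr ?_) hppos.le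
  have := hbound (x - μ)
  have hsq : ∀ i, (x - μ) i ^ 2 = (x - μ) i ^ 2 := fun _ => rfl
  nlinarith [hbound (x - μ)]

lemma integral_gaussN_shift (S : Matrix (Fin n) (Fin n) ℝ) (μ : Fin n → ℝ) :
    ∫ x, gaussN n μ S x = ∫ x, gaussN n 0 S x := by
  have h : ∀ x, gaussN n μ S x = gaussN n 0 S (x - μ) := by
    intro x; unfold gaussN; rw [sub_zero]
  simp_rw [h]
  exact integral_sub_right_eq_self (gaussN n 0 S) μ


lemma arith_helper (p₁ p₂ p₃ E e₃ : ℝ) (h : p₃ ≠ 0) :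
    (p₁ * p₂) * (E * e₃) = (p₁ * p₂ / p₃ * E) * (p₃ * e₃) := by
  field_simp

lemma gaussN_mul_gaussN {C₁ C₂ : Matrix (Fin n) (Fin n) ℝ}
    (h₁ : C₁.PosDef) (h₂ : C₂.PosDef) (μ₁ : Fin n → ℝ) :
    ∃ (S : Matrix (Fin n) (Fin n) ℝ) (c : ℝ) (ν : (Fin n → ℝ) → (Fin n → ℝ)),
      S.PosDef ∧
      ∀ μ₂ x, gaussN n μ₁ C₁ x * gaussN n μ₂ C₂ x
        = (c * Real.exp (-(1/2) * ((μ₁ - μ₂) ⬝ᵥ ((C₁ + C₂)⁻¹ *ᵥ (μ₁ - μ₂)))))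
            * gaussN n (ν μ₂) S x := by
  have h₁d : IsUnit C₁.det := isUnit_iff_ne_zero.mpr h₁.det_pos.ne'
  have h₂d : IsUnit C₂.det := isUnit_iff_ne_zero.mpr h₂.det_pos.ne'
  have hP₁ : (C₁⁻¹).PosDef := h₁.inv
  have hP₂ : (C₂⁻¹).PosDef := h₂.inv
  have hP : (C₁⁻¹ + C₂⁻¹).PosDef := hP₁.add hP₂
  have hPd : IsUnit (C₁⁻¹ + C₂⁻¹).det := isUnit_iff_ne_zero.mpr hP.det_pos.ne'
  have tP₁ : (C₁⁻¹)ᵀ = C₁⁻¹ := tEq hP₁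
  have tP₂ : (C₂⁻¹)ᵀ = C₂⁻¹ := tEq hP₂
  have tP : (C₁⁻¹ + C₂⁻¹)ᵀ = C₁⁻¹ + C₂⁻¹ := tEq hP
  have hS : ((C₁⁻¹ + C₂⁻¹)⁻¹).PosDef := hP.inv
  have hSinv : ((C₁⁻¹ + C₂⁻¹)⁻¹)⁻¹ = C₁⁻¹ + C₂⁻¹ := Matrix.nonsing_inv_nonsing_inv _ hPd
  have hpr₃ : (0:ℝ) < (2 * Real.pi) ^ (-(n:ℝ)/2) * ((C₁⁻¹ + C₂⁻¹)⁻¹).det ^ (-(1:ℝ)/2) :=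
    pref_pos hS
  have main : ∀ μ₂ x, gaussN n μ₁ C₁ x * gaussN n μ₂ C₂ x
      = (((2 * Real.pi) ^ (-(n:ℝ)/2) * C₁.det ^ (-(1:ℝ)/2)
            * ((2 * Real.pi) ^ (-(n:ℝ)/2) * C₂.det ^ (-(1:ℝ)/2))
            / ((2 * Real.pi) ^ (-(n:ℝ)/2) * ((C₁⁻¹ + C₂⁻¹)⁻¹).det ^ (-(1:ℝ)/2)))
          * Real.exp (-(1/2) * ((μ₁ - μ₂) ⬝ᵥ ((C₁ + C₂)⁻¹ *ᵥ (μ₁ - μ₂)))))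
        * gaussN n ((C₁⁻¹ + C₂⁻¹)⁻¹ *ᵥ (C₁⁻¹ *ᵥ μ₁ + C₂⁻¹ *ᵥ μ₂)) ((C₁⁻¹ + C₂⁻¹)⁻¹) x := by
    intro μ₂ x
    obtain ⟨ν, hν⟩ : ∃ ν, ν = (C₁⁻¹ + C₂⁻¹)⁻¹ *ᵥ (C₁⁻¹ *ᵥ μ₁ + C₂⁻¹ *ᵥ μ₂) := ⟨_, rfl⟩
    rw [← hν]
    have hPν : (C₁⁻¹ + C₂⁻¹) *ᵥ ν = C₁⁻¹ *ᵥ μ₁ + C₂⁻¹ *ᵥ μ₂ := by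
      rw [hν, mulVec_mulVec, Matrix.mul_nonsing_inv _ hPd, one_mulVec]
    obtain ⟨Δ, hΔ⟩ : ∃ Δ : ℝ, Δ = μ₁ ⬝ᵥ (C₁⁻¹ *ᵥ μ₁) + μ₂ ⬝ᵥ (C₂⁻¹ *ᵥ μ₂)
        - ν ⬝ᵥ (C₁⁻¹ *ᵥ μ₁ + C₂⁻¹ *ᵥ μ₂) := ⟨_, rfl⟩
    have key1 : ∀ y : Fin n → ℝ,
        (y - μ₁) ⬝ᵥ (C₁⁻¹ *ᵥ (y - μ₁)) + (y - μ₂) ⬝ᵥ (C₂⁻¹ *ᵥ (y - μ₂))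
          = (y - ν) ⬝ᵥ ((C₁⁻¹ + C₂⁻¹) *ᵥ (y - ν)) + Δ := by
      intro y
      rw [quad_expand tP₁, quad_expand tP₂, quad_expand tP, hPν, hΔ]
      simp only [add_mulVec, dotProduct_add]
      ring
    have hCinv : (C₁ + C₂)⁻¹ = C₂⁻¹ * ((C₁⁻¹ + C₂⁻¹)⁻¹ * C₁⁻¹) := by
      have hsum : C₁ * ((C₁⁻¹ + C₂⁻¹) * C₂) = C₁ + C₂ := by
        rw [Matrix.add_mul, Matrix.nonsing_inv_mul _ h₂d, Matrix.mul_add, Matrix.mul_one,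
          ← Matrix.mul_assoc, Matrix.mul_nonsing_inv _ h₁d, Matrix.one_mul, add_comm]
      rw [← hsum, Matrix.mul_inv_rev, Matrix.mul_inv_rev, Matrix.mul_assoc]
    have key2 : Δ = (μ₁ - μ₂) ⬝ᵥ ((C₁ + C₂)⁻¹ *ᵥ (μ₁ - μ₂)) := by
      obtain ⟨d, hd⟩ : ∃ d, d = μ₁ - μ₂ := ⟨_, rfl⟩
      have e0 := key1 μ₁
      rw [sub_self, mulVec_zero, dotProduct_zero, zero_add, ← hd] at e0
      have e2 : μ₁ - ν = (C₁⁻¹ + C₂⁻¹)⁻¹ *ᵥ (C₂⁻¹ *ᵥ d) := by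
        have h1 : (C₁⁻¹ + C₂⁻¹) *ᵥ (μ₁ - ν) = C₂⁻¹ *ᵥ d := by
          rw [mulVec_sub, hPν, hd, add_mulVec, mulVec_sub]
          abel
        rw [← h1, mulVec_mulVec, Matrix.nonsing_inv_mul _ hPd, one_mulVec]
      obtain ⟨w, hw⟩ : ∃ w, w = C₂⁻¹ *ᵥ d := ⟨_, rfl⟩
      rw [← hw] at e2 e0
      rw [e2] at e0
      have e3 : ((C₁⁻¹ + C₂⁻¹)⁻¹ *ᵥ w) ⬝ᵥ ((C₁⁻¹ + C₂⁻¹) *ᵥ ((C₁⁻¹ + C₂⁻¹)⁻¹ *ᵥ w))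
          = w ⬝ᵥ ((C₁⁻¹ + C₂⁻¹)⁻¹ *ᵥ w) := by
        have hcan : (C₁⁻¹ + C₂⁻¹) *ᵥ ((C₁⁻¹ + C₂⁻¹)⁻¹ *ᵥ w) = w := by
          rw [mulVec_mulVec, Matrix.mul_nonsing_inv _ hPd, one_mulVec]
        rw [hcan, dotProduct_comm]
      rw [e3] at e0
      have e5 : C₁⁻¹ *ᵥ d = (C₁⁻¹ + C₂⁻¹) *ᵥ d - w := by
        rw [hw, add_mulVec]
        abel
      have e7 : (C₁⁻¹ + C₂⁻¹)⁻¹ *ᵥ ((C₁⁻¹ + C₂⁻¹) *ᵥ d) = d := by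
        rw [mulVec_mulVec, Matrix.nonsing_inv_mul _ hPd, one_mulVec]
      have e6 : d ⬝ᵥ ((C₁ + C₂)⁻¹ *ᵥ d)
          = w ⬝ᵥ d - w ⬝ᵥ ((C₁⁻¹ + C₂⁻¹)⁻¹ *ᵥ w) := by
        have e4 : (C₁ + C₂)⁻¹ *ᵥ d = C₂⁻¹ *ᵥ ((C₁⁻¹ + C₂⁻¹)⁻¹ *ᵥ (C₁⁻¹ *ᵥ d)) := by
          rw [hCinv, ← mulVec_mulVec, ← mulVec_mulVec]
        rw [e4, dp_symm tP₂ d ((C₁⁻¹ + C₂⁻¹)⁻¹ *ᵥ (C₁⁻¹ *ᵥ d)), ← hw, dotProduct_comm,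
          e5, mulVec_sub, dotProduct_sub, e7]
      rw [← hd, e6]
      have hcomm : d ⬝ᵥ w = w ⬝ᵥ d := dotProduct_comm d w
      linarith [e0]
    -- analytic part
    unfold gaussN
    rw [hSinv]
    have hexp : Real.exp (-(1/2) * ((x - μ₁) ⬝ᵥ (C₁⁻¹ *ᵥ (x - μ₁))))
        * Real.exp (-(1/2) * ((x - μ₂) ⬝ᵥ (C₂⁻¹ *ᵥ (x - μ₂))))
        = Real.exp (-(1/2) * ((μ₁ - μ₂) ⬝ᵥ ((C₁ + C₂)⁻¹ *ᵥ (μ₁ - μ₂))))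
          * Real.exp (-(1/2) * ((x - ν) ⬝ᵥ ((C₁⁻¹ + C₂⁻¹) *ᵥ (x - ν)))) := by
      rw [← Real.exp_add, ← Real.exp_add]
      congr 1
      rw [← key2]
      linarith [key1 x]
    calc (2 * Real.pi) ^ (-(n:ℝ)/2) * C₁.det ^ (-(1:ℝ)/2)
          * Real.exp (-(1/2) * ((x - μ₁) ⬝ᵥ (C₁⁻¹ *ᵥ (x - μ₁))))
          * ((2 * Real.pi) ^ (-(n:ℝ)/2) * C₂.det ^ (-(1:ℝ)/2)
            * Real.exp (-(1/2) * ((x - μ₂) ⬝ᵥ (C₂⁻¹ *ᵥ (x - μ₂)))))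
        = ((2 * Real.pi) ^ (-(n:ℝ)/2) * C₁.det ^ (-(1:ℝ)/2)
            * ((2 * Real.pi) ^ (-(n:ℝ)/2) * C₂.det ^ (-(1:ℝ)/2)))
          * (Real.exp (-(1/2) * ((x - μ₁) ⬝ᵥ (C₁⁻¹ *ᵥ (x - μ₁))))
            * Real.exp (-(1/2) * ((x - μ₂) ⬝ᵥ (C₂⁻¹ *ᵥ (x - μ₂))))) := by ring
      _ = ((2 * Real.pi) ^ (-(n:ℝ)/2) * C₁.det ^ (-(1:ℝ)/2)
            * ((2 * Real.pi) ^ (-(n:ℝ)/2) * C₂.det ^ (-(1:ℝ)/2)))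
          * (Real.exp (-(1/2) * ((μ₁ - μ₂) ⬝ᵥ ((C₁ + C₂)⁻¹ *ᵥ (μ₁ - μ₂))))
            * Real.exp (-(1/2) * ((x - ν) ⬝ᵥ ((C₁⁻¹ + C₂⁻¹) *ᵥ (x - ν))))) := by rw [hexp]
      _ = ((2 * Real.pi) ^ (-(n:ℝ)/2) * C₁.det ^ (-(1:ℝ)/2)
            * ((2 * Real.pi) ^ (-(n:ℝ)/2) * C₂.det ^ (-(1:ℝ)/2))
            / ((2 * Real.pi) ^ (-(n:ℝ)/2) * ((C₁⁻¹ + C₂⁻¹)⁻¹).det ^ (-(1:ℝ)/2))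
          * Real.exp (-(1/2) * ((μ₁ - μ₂) ⬝ᵥ ((C₁ + C₂)⁻¹ *ᵥ (μ₁ - μ₂)))))
          * ((2 * Real.pi) ^ (-(n:ℝ)/2) * ((C₁⁻¹ + C₂⁻¹)⁻¹).det ^ (-(1:ℝ)/2)
            * Real.exp (-(1/2) * ((x - ν) ⬝ᵥ ((C₁⁻¹ + C₂⁻¹) *ᵥ (x - ν))))) :=
          arith_helper _ _ _ _ _ hpr₃.ne'
  exact ⟨(C₁⁻¹ + C₂⁻¹)⁻¹, _, fun μ₂ => (C₁⁻¹ + C₂⁻¹)⁻¹ *ᵥ (C₁⁻¹ *ᵥ μ₁ + C₂⁻¹ *ᵥ μ₂),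
    hS, main⟩


lemma gauss_mem_span {S : Matrix (Fin n) (Fin n) ℝ} (hS : S.PosDef) (μ : Fin n → ℝ) :
    gaussN n μ S ∈ Submodule.span ℝ (gaussSet n) :=
  Submodule.subset_span ⟨μ, S, hS, rfl⟩

/-- `x ↦ r * exp(-(1/2) (x-μ)ᵀ B (x-μ))` with `B` positive definite is in the span. -/
lemma const_mul_exp_quad_mem_span {B : Matrix (Fin n) (Fin n) ℝ} (hB : B.PosDef)
    (μ : Fin n → ℝ) (r : ℝ) :
    (fun x => r * Real.exp (-(1/2) * ((x - μ) ⬝ᵥ (B *ᵥ (x - μ)))))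
      ∈ Submodule.span ℝ (gaussSet n) := by
  have hBd : IsUnit B.det := isUnit_iff_ne_zero.mpr hB.det_pos.ne'
  have hS : (B⁻¹).PosDef := hB.inv
  have hinv : (B⁻¹)⁻¹ = B := Matrix.nonsing_inv_nonsing_inv _ hBd
  have hpr : (0:ℝ) < (2 * Real.pi) ^ (-(n:ℝ)/2) * (B⁻¹).det ^ (-(1:ℝ)/2) := pref_pos hS
  refine mem_span_of_eq (h := (r / ((2 * Real.pi) ^ (-(n:ℝ)/2) * (B⁻¹).det ^ (-(1:ℝ)/2)))
    • gaussN n μ B⁻¹) (fun x => ?_) (Submodule.smul_mem _ _ (gauss_mem_span hS μ))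
  simp only [Pi.smul_apply, smul_eq_mul]
  unfold gaussN
  rw [hinv, ← mul_assoc, div_mul_cancel₀ _ hpr.ne']

/-- conjugation of a positive definite matrix by an invertible matrix -/
lemma posdef_conj {M A : Matrix (Fin n) (Fin n) ℝ} (hM : M.PosDef) (hA : IsUnit A.det) :
    (Aᵀ * M * A).PosDef := by
  have hAu : IsUnit A := (Matrix.isUnit_iff_isUnit_det A).mpr hA
  have hinj : Function.Injective (A.mulVec) := Matrix.mulVec_injective_iff_isUnit.mpr hAu
  refine Matrix.PosDef.of_dotProduct_mulVec_pos ?_ ?_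
  · show (Aᵀ * M * A)ᴴ = Aᵀ * M * A
    simp only [Matrix.conjTranspose_mul, Matrix.conjTranspose_eq_transpose_of_trivial,
      Matrix.transpose_mul, Matrix.transpose_transpose, Matrix.mul_assoc, tEq hM]
  · intro v hv
    have hv' : A *ᵥ v ≠ 0 := by
      intro h
      exact hv (hinj (by rw [h, Matrix.mulVec_zero]))
    have hpos := posDef_apply hM hv'
    have hre : star v ⬝ᵥ ((Aᵀ * M * A) *ᵥ v) = (A *ᵥ v) ⬝ᵥ (M *ᵥ (A *ᵥ v)) := by
      rw [star_trivial, ← Matrix.mulVec_mulVec, ← Matrix.mulVec_mulVec,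
        Matrix.dotProduct_mulVec, Matrix.vecMul_transpose]
    rw [hre]
    exact hpos


/-- `x ↦ r * exp(-(1/2) (m - (Ax+f))ᵀ M (m - (Ax+f)))` is in the span when `M` is
positive definite and `A` is invertible. -/
lemma exp_affine_mem_span {Mt A : Matrix (Fin n) (Fin n) ℝ} (hM : Mt.PosDef)
    (hA : IsUnit A.det) (m fv : Fin n → ℝ) (r : ℝ) :
    (fun x => r * Real.exp (-(1/2) *
        ((m - (A *ᵥ x + fv)) ⬝ᵥ (Mt *ᵥ (m - (A *ᵥ x + fv))))))
      ∈ Submodule.span ℝ (gaussSet n) := by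
  have hB : (Aᵀ * Mt * A).PosDef := posdef_conj hM hA
  have hAμ : A *ᵥ (A⁻¹ *ᵥ (m - fv)) = m - fv := by
    rw [Matrix.mulVec_mulVec, Matrix.mul_nonsing_inv _ hA, Matrix.one_mulVec]
  refine mem_span_of_eq (fun x => ?_) (const_mul_exp_quad_mem_span hB (A⁻¹ *ᵥ (m - fv)) r)
  congr 2
  have h1 : m - (A *ᵥ x + fv) = -(A *ᵥ (x - A⁻¹ *ᵥ (m - fv))) := by
    rw [Matrix.mulVec_sub, hAμ]
    abel
  rw [h1, Matrix.mulVec_neg, dotProduct_neg, neg_dotProduct, neg_neg]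
  conv_rhs => rw [← Matrix.mulVec_mulVec, ← Matrix.mulVec_mulVec,
    Matrix.dotProduct_mulVec, Matrix.vecMul_transpose]

/-- product of two members of the span is in the span -/
lemma mul_mem_span {g h : (Fin n → ℝ) → ℝ}
    (hg : g ∈ Submodule.span ℝ (gaussSet n)) (hh : h ∈ Submodule.span ℝ (gaussSet n)) :
    g * h ∈ Submodule.span ℝ (gaussSet n) := by
  induction hg, hh using Submodule.span_induction₂ with
  | mem_mem g h hg hh =>
      obtain ⟨μ₁, C₁, hC₁, rfl⟩ := hg
      obtain ⟨μ₂, C₂, hC₂, rfl⟩ := hh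
      obtain ⟨S, c, ν, hS, hfm⟩ := gaussN_mul_gaussN hC₁ hC₂ μ₁
      refine mem_span_of_eq (g := gaussN n μ₁ C₁ * gaussN n μ₂ C₂)
        (h := (c * Real.exp (-(1/2) * ((μ₁ - μ₂) ⬝ᵥ ((C₁ + C₂)⁻¹ *ᵥ (μ₁ - μ₂)))))
          • gaussN n (ν μ₂) S) (fun x => ?_) (Submodule.smul_mem _ _ (gauss_mem_span hS _))
      simp only [Pi.mul_apply, Pi.smul_apply, smul_eq_mul]
      exact hfm μ₂ x
  | zero_left h hh => rw [zero_mul]; exact Submodule.zero_mem _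
  | zero_right g hg => rw [mul_zero]; exact Submodule.zero_mem _
  | add_left x y z hx hy hz h1 h2 => rw [add_mul]; exact Submodule.add_mem _ h1 h2
  | add_right x y z hx hy hz h1 h2 => rw [mul_add]; exact Submodule.add_mem _ h1 h2
  | smul_left r x y hx hy h1 => rw [smul_mul_assoc]; exact Submodule.smul_mem _ _ h1
  | smul_right r x y hx hy h1 => rw [mul_smul_comm]; exact Submodule.smul_mem _ _ h1


/-- integrating a span member against the Gaussian transition kernel, as a function of the
current state, stays in the span -/
lemma integral_kernel_mem_span {A : Matrix (Fin n) (Fin n) ℝ} (hA : IsUnit A.det)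
    (fv : Fin n → ℝ) {W : Matrix (Fin n) (Fin n) ℝ} (hW : W.PosDef)
    {G : (Fin n → ℝ) → ℝ} (hG : G ∈ Submodule.span ℝ (gaussSet n)) :
    (fun x => ∫ x', G x' * gaussN n (A *ᵥ x + fv) W x')
      ∈ Submodule.span ℝ (gaussSet n) := by
  obtain ⟨M, c, m, C, hC, hGx⟩ := isGaussMixture_iff.mpr hG
  choose S c' ν hS hfm using fun k => gaussN_mul_gaussN (hC k) hW (m k)
  have hrw : ∀ (k : Fin M) (t : Fin n → ℝ),
      (fun x' => c k * (gaussN n (m k) (C k) x' * gaussN n t W x'))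
        = fun x' => (c k * (c' k * Real.exp (-(1/2) *
            ((m k - t) ⬝ᵥ ((C k + W)⁻¹ *ᵥ (m k - t)))))) * gaussN n (ν k t) (S k) x' := by
    intro k t
    funext x'
    rw [hfm k t x']
    ring
  have hint : ∀ (k : Fin M) (t : Fin n → ℝ),
      Integrable (fun x' => c k * (gaussN n (m k) (C k) x' * gaussN n t W x')) := by
    intro k t
    rw [hrw k t]
    exact (gaussN_integrable (hS k) _).const_mul _
  have hval : ∀ x : Fin n → ℝ,
      (∫ x', G x' * gaussN n (A *ᵥ x + fv) W x')
        = ∑ k, (c k * (c' k * (∫ x', gaussN n 0 (S k) x')))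
            * Real.exp (-(1/2) * ((m k - (A *ᵥ x + fv)) ⬝ᵥ
                ((C k + W)⁻¹ *ᵥ (m k - (A *ᵥ x + fv))))) := by
    intro x
    have hfeq : (fun x' => G x' * gaussN n (A *ᵥ x + fv) W x')
        = fun x' => ∑ k, c k * (gaussN n (m k) (C k) x' * gaussN n (A *ᵥ x + fv) W x') := by
      funext x'
      rw [hGx x', Finset.sum_mul]
      simp only [mul_assoc]
    rw [hfeq, integral_finset_sum _ (fun k _ => hint k _)]
    refine Finset.sum_congr rfl fun k _ => ?_
    rw [hrw k _, integral_const_mul, integral_gaussN_shift]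
    ring
  refine mem_span_of_eq hval ?_
  have hsum : (fun x => ∑ k, (c k * (c' k * (∫ x', gaussN n 0 (S k) x')))
          * Real.exp (-(1/2) * ((m k - (A *ᵥ x + fv)) ⬝ᵥ
              ((C k + W)⁻¹ *ᵥ (m k - (A *ᵥ x + fv))))))
      = ∑ k, fun x => (c k * (c' k * (∫ x', gaussN n 0 (S k) x')))
          * Real.exp (-(1/2) * ((m k - (A *ᵥ x + fv)) ⬝ᵥ
              ((C k + W)⁻¹ *ᵥ (m k - (A *ᵥ x + fv))))) := by
    funext x
    simp [Finset.sum_apply]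
  rw [hsum]
  exact Submodule.sum_mem _ fun k _ =>
    exp_affine_mem_span ((hC k).add hW).inv hA (m k) fv _

end GaussBackup

/-- Closedness of the α-function backup under Gaussian mixtures: if the
next-stage α-functions, the observation likelihood, the discrete-transition
mixture approximation, and the indicator approximation are all finite Gaussian
mixtures, and the continuous transition kernel is `φ(x'; Ax + f(q'), W)` with `A`
invertible and `W` positive definite, then for each mode `q` the backed-up
function `α_{y,u}(x,q)` is again a finite Gaussian mixture in `x`. -/
theorem alpha_backup_gauss_mixture_closed
    (n : ℕ) {Q : Type*} [Fintype Q]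
    (A : Matrix (Fin n) (Fin n) ℝ) (hA : IsUnit A.det)
    (f : Q → (Fin n → ℝ)) (W : Matrix (Fin n) (Fin n) ℝ) (hW : W.PosDef)
    (Qw : Q → ℝ)
    (αnext : Q → (Fin n → ℝ) → ℝ) (hα : ∀ q', IsGaussMixture n (αnext q'))
    (ψ : (Fin n → ℝ) → ℝ) (hψ : IsGaussMixture n ψ)
    (Tmix : Q → Q → (Fin n → ℝ) → ℝ) (hT : ∀ q' q, IsGaussMixture n (Tmix q' q))
    (Ind : (Fin n → ℝ) → ℝ) (hInd : IsGaussMixture n Ind) :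
    ∀ q : Q, IsGaussMixture n (fun x =>
      (∑ q' : Q, Qw q' *
          (∫ x' : Fin n → ℝ, αnext q' x' * ψ x' * gaussN n (A *ᵥ x + f q') W x') *
          Tmix q' q x) * Ind x) := by
  open GaussBackup in
  intro q
  rw [GaussBackup.isGaussMixture_iff]
  have hJ : ∀ q' : Q,
      (fun x => ∫ x' : Fin n → ℝ, αnext q' x' * ψ x' * gaussN n (A *ᵥ x + f q') W x')
        ∈ Submodule.span ℝ (GaussBackup.gaussSet n) := by
    intro q'
    have hG : (fun x' => αnext q' x' * ψ x') ∈ Submodule.span ℝ (GaussBackup.gaussSet n) :=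
      GaussBackup.mem_span_of_eq (fun x' => rfl)
        (GaussBackup.mul_mem_span (GaussBackup.isGaussMixture_iff.mp (hα q'))
          (GaussBackup.isGaussMixture_iff.mp hψ))
    exact GaussBackup.integral_kernel_mem_span hA (f q') hW hG
  have hSumMem : (fun x => ∑ q' : Q, Qw q' *
        (∫ x' : Fin n → ℝ, αnext q' x' * ψ x' * gaussN n (A *ᵥ x + f q') W x') *
        Tmix q' q x) ∈ Submodule.span ℝ (GaussBackup.gaussSet n) := by
    have hsum : (fun x => ∑ q' : Q, Qw q' *
          (∫ x' : Fin n → ℝ, αnext q' x' * ψ x' * gaussN n (A *ᵥ x + f q') W x') *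
          Tmix q' q x)
        = ∑ q' : Q, fun x => Qw q' *
            (∫ x' : Fin n → ℝ, αnext q' x' * ψ x' * gaussN n (A *ᵥ x + f q') W x') *
            Tmix q' q x := by
      funext x
      simp [Finset.sum_apply]
    rw [hsum]
    refine Submodule.sum_mem _ fun q' _ => ?_
    refine GaussBackup.mem_span_of_eq
      (h := Qw q' • ((fun x => ∫ x' : Fin n → ℝ,
          αnext q' x' * ψ x' * gaussN n (A *ᵥ x + f q') W x') * Tmix q' q))
      (fun x => ?_) (Submodule.smul_mem _ _
        (GaussBackup.mul_mem_span (hJ q')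
          (GaussBackup.isGaussMixture_iff.mp (hT q' q))))
    simp only [Pi.smul_apply, Pi.mul_apply, smul_eq_mul]
    ring
  exact GaussBackup.mul_mem_span hSumMem (GaussBackup.isGaussMixture_iff.mp hInd)
end
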